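/- (Nemhauser–Wolsey–Fisher greedy bound) Let f be a monotone, non-negative, submodular set function on a finite ground set V with f(∅) = 0, let b ≥ 1 be a natural number, and let S₀ = ∅, S₁, …, S_b be a greedy sequence: for each i < b there is x_i ∉ S_i with S_{i+1} = S_i ∪ {x_i} and f(S_i ∪ {x_i}) ≥ f(S_i ∪ {y}) for every y ∈ V. Then for every finite subset T ⊆ V with |T| ≤ b, f(S_b) ≥ (1 − 1/e) · f(T). -/

import Mathlib

lemma greedy_tele {V : Type*} [DecidableEq V] (f : Finset V → ℝ)
    (hsubmod : ∀ A B : Finset V, A ⊆ B → ∀ x ∉ B,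
      f (insert x A) - f A ≥ f (insert x B) - f B)
    (T A : Finset V) :
    f (A ∪ T) ≤ f A + ∑ y ∈ T, (f (insert y A) - f A) := by
  induction T using Finset.induction_on with
  | empty => simp
  | insert _ _ ha ih =>
    rename_i a T
    rw [Finset.sum_insert ha, Finset.union_insert]
    by_cases h : a ∈ A ∪ T
    · have hA : a ∈ A := by
        rcases Finset.mem_union.mp h with h' | h'
        · exact h'
        · exact absurd h' ha
      rw [Finset.insert_eq_self.mpr h, Finset.insert_eq_self.mpr hA]
      linarith
    · have := hsubmod A (A ∪ T) Finset.subset_union_left a h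
      linarith

theorem greedy_submodular_bound {V : Type*} [Fintype V] [DecidableEq V]
    (f : Finset V → ℝ)
    (hmono : ∀ A B : Finset V, A ⊆ B → f A ≤ f B)
    (hnonneg : ∀ S : Finset V, 0 ≤ f S)
    (hsubmod : ∀ A B : Finset V, A ⊆ B → ∀ x ∉ B,
      f (insert x A) - f A ≥ f (insert x B) - f B)
    (hempty : f ∅ = 0)
    (b : ℕ) (hb : 1 ≤ b)
    (S : ℕ → Finset V) (x : ℕ → V)
    (hS0 : S 0 = ∅)
    (hgreedy : ∀ i < b, x i ∉ S i ∧ S (i + 1) = insert (x i) (S i) ∧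
      ∀ y : V, f (insert (x i) (S i)) ≥ f (insert y (S i)))
    (T : Finset V) (hT : T.card ≤ b) :
    f (S b) ≥ (1 - 1 / Real.exp 1) * f T := by
  have hbR : (1:ℝ) ≤ (b:ℝ) := by exact_mod_cast hb
  have hbpos : (0:ℝ) < b := by linarith
  have hr0 : (0:ℝ) ≤ 1 - 1 / b := by
    rw [sub_nonneg, div_le_one hbpos]; linarith
  -- gap decay
  have key : ∀ i ≤ b, f T - f (S i) ≤ (1 - 1 / b) ^ i * f T := by
    intro i hi
    induction i with
    | zero => simp [hS0, hempty]
    | succ i ih =>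
      have hib : i < b := hi
      have ih' := ih (le_of_lt hib)
      obtain ⟨hx, hSsucc, hbest⟩ := hgreedy i hib
      set δ := f (S (i+1)) - f (S i) with hδ
      have hδ0 : 0 ≤ δ := by
        have := hmono (S i) (S (i+1)) (by rw [hSsucc]; exact Finset.subset_insert _ _)
        linarith
      -- f T ≤ f (S i) + b * δ
      have h1 : f T ≤ f (S i ∪ T) := hmono _ _ Finset.subset_union_right
      have h2 := greedy_tele f hsubmod T (S i)
      have h3 : ∑ y ∈ T, (f (insert y (S i)) - f (S i)) ≤ (T.card : ℝ) * δ := by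
        calc ∑ y ∈ T, (f (insert y (S i)) - f (S i)) ≤ ∑ _y ∈ T, δ := by
              apply Finset.sum_le_sum
              intro y _
              have := hbest y
              rw [hδ, hSsucc]
              linarith
          _ = (T.card : ℝ) * δ := by rw [Finset.sum_const, nsmul_eq_mul]
      have hcard : (T.card : ℝ) * δ ≤ (b:ℝ) * δ := by
        apply mul_le_mul_of_nonneg_right _ hδ0
        exact_mod_cast hT
      have hgb : f T - f (S i) ≤ (b:ℝ) * δ := by linarith
      have hstep : f T - f (S (i+1)) ≤ (1 - 1 / b) * (f T - f (S i)) := by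
        have : (f T - f (S i)) / b ≤ δ := by
          rw [div_le_iff₀ hbpos]; linarith [mul_comm δ (b:ℝ)]
        have hexp : (1 - 1/(b:ℝ)) * (f T - f (S i)) = (f T - f (S i)) - (f T - f (S i))/b := by
          field_simp
        rw [hexp]
        linarith
      calc f T - f (S (i+1)) ≤ (1 - 1/b) * (f T - f (S i)) := hstep
        _ ≤ (1 - 1/b) * ((1 - 1 / b) ^ i * f T) := by
            exact mul_le_mul_of_nonneg_left ih' hr0
        _ = (1 - 1 / b) ^ (i+1) * f T := by ring
  have hkey := key b le_rfl
  -- (1 - 1/b)^b ≤ 1 / e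
  have hpow : (1 - 1/(b:ℝ)) ^ b ≤ 1 / Real.exp 1 := by
    have h1 : (1 - 1/(b:ℝ)) ≤ Real.exp (-(1/b)) := by
      have := Real.add_one_le_exp (-(1/(b:ℝ)))
      linarith
    have h2 : (1 - 1/(b:ℝ)) ^ b ≤ Real.exp (-(1/b)) ^ b :=
      pow_le_pow_left₀ hr0 h1 b
    have h3 : Real.exp (-(1/(b:ℝ))) ^ b = Real.exp (-1) := by
      rw [← Real.exp_nat_mul]
      congr 1
      field_simp
    rw [h3, Real.exp_neg] at h2
    simpa [one_div] using h2
  have hfT : 0 ≤ f T := hnonneg T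
  have : (1 - 1/(b:ℝ)) ^ b * f T ≤ (1 / Real.exp 1) * f T :=
    mul_le_mul_of_nonneg_right hpow hfT
  linarith
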